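/- There exists a universal constant C such that for every L ∈ ℕ, every susceptible set 𝒮 ⊆ ℤ², every good box Q of side L, and every configuration η in which some column of Q is fully infected, there is a legal sequence of moves from η, all at sites of Q, of length at most C·L², ending at a configuration η′ in which some row of Q is fully infected, η′ agrees with η outside Q, and every configuration along the sequence differs from η on at most 3L sites. -/

import Mathlib

/-- Sites of the two-dimensional lattice. -/
abbrev Site : Type := ℤ × ℤ

/-- A configuration: `true` iff the site's state is infected. -/
abbrev Cfg : Type := Site → Bool

/-- A site is infected: susceptible and its state is infected. -/
def Infct (sus : Set Site) (η : Cfg) (x : Site) : Prop := x ∈ sus ∧ η x = true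

/-- Nearest-neighbour adjacency in ℤ². -/
def SiteAdj (a b : Site) : Prop :=
  (a.1 = b.1 ∧ (a.2 = b.2 + 1 ∨ a.2 + 1 = b.2)) ∨
  (a.2 = b.2 ∧ (a.1 = b.1 + 1 ∨ a.1 + 1 = b.1))

/-- The FA2f constraint at `x`: at least two nearest neighbours of `x` are susceptible
and infected. -/
def Constr (sus : Set Site) (η : Cfg) (x : Site) : Prop :=
  2 ≤ {y : Site | SiteAdj x y ∧ Infct sus η y}.ncard

/-- A move: a site together with the state it is set to (`true` = infected). -/
abbrev Move : Type := Site × Bool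

/-- The configuration after applying the first `n` moves of `ms` to `η`. -/
def evolve (η : Cfg) (ms : ℕ → Move) : ℕ → Cfg
  | 0 => η
  | n + 1 => Function.update (evolve η ms n) (ms n).1 (ms n).2

/-- The first `k` moves of `ms` form a legal sequence of moves from `η`:
each move is at a susceptible site whose constraint is satisfied at the time of the move. -/
def LegalSeq (sus : Set Site) (η : Cfg) (ms : ℕ → Move) (k : ℕ) : Prop :=
  ∀ i < k, (ms i).1 ∈ sus ∧ Constr sus (evolve η ms i) (ms i).1

/-- The box `b + [0,L)²`. -/
def boxAt (L : ℕ) (b : Site) : Set Site :=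
  {y | b.1 ≤ y.1 ∧ y.1 < b.1 + L ∧ b.2 ≤ y.2 ∧ y.2 < b.2 + L}

/-- The box `b + [0,L)²` is good: all its sites are susceptible and each of its `L` rows
and each of its `L` columns contains at least one infected site. -/
def GoodBoxAt (L : ℕ) (sus : Set Site) (η : Cfg) (b : Site) : Prop :=
  (∀ y ∈ boxAt L b, y ∈ sus) ∧
  (∀ j < L, ∃ i < L, Infct sus η (b.1 + i, b.2 + j)) ∧
  (∀ i < L, ∃ j < L, Infct sus η (b.1 + i, b.2 + j))

/-- Column `i` of the box `b + [0,L)²` is fully infected. -/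
def InfColAt (L : ℕ) (sus : Set Site) (η : Cfg) (b : Site) (i : ℕ) : Prop :=
  ∀ j < L, Infct sus η (b.1 + i, b.2 + j)

/-- Row `j` of the box `b + [0,L)²` is fully infected. -/
def InfRowAt (L : ℕ) (sus : Set Site) (η : Cfg) (b : Site) (j : ℕ) : Prop :=
  ∀ i < L, Infct sus η (b.1 + i, b.2 + j)

section Infra

/-- two distinct infected susceptible neighbours give the constraint -/
lemma constr_of_two {sus : Set Site} {θ : Cfg} {x y1 y2 : Site}
    (h12 : y1 ≠ y2) (a1 : SiteAdj x y1) (a2 : SiteAdj x y2)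
    (s1 : y1 ∈ sus) (s2 : y2 ∈ sus) (t1 : θ y1 = true) (t2 : θ y2 = true) :
    Constr sus θ x := by
  have hsub : ({y1, y2} : Set Site) ⊆ {y : Site | SiteAdj x y ∧ Infct sus θ y} := by
    intro y hy
    rcases hy with rfl | rfl
    · exact ⟨a1, s1, t1⟩
    · exact ⟨a2, s2, t2⟩
  have hN : {y : Site | SiteAdj x y ∧ Infct sus θ y} ⊆
      {(x.1, x.2 + 1), (x.1, x.2 - 1), (x.1 + 1, x.2), (x.1 - 1, x.2)} := by
    intro y hy
    rcases hy.1 with ⟨h1, h2 | h2⟩ | ⟨h1, h2 | h2⟩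
    · right; left; simp [Prod.ext_iff]; omega
    · left; simp [Prod.ext_iff]; omega
    · right; right; right; simp [Prod.ext_iff]; omega
    · right; right; left; simp [Prod.ext_iff]; omega
  have hfin : {y : Site | SiteAdj x y ∧ Infct sus θ y}.Finite :=
    Set.Finite.subset (Set.toFinite _) hN
  have := Set.ncard_le_ncard hsub hfin
  rwa [Set.ncard_pair h12] at this

/-- apply a list of moves -/
def applyL : Cfg → List Move → Cfg
  | η, [] => η
  | η, m :: l => applyL (Function.update η m.1 m.2) l

def LegalL (sus : Set Site) : Cfg → List Move → Prop
  | _, [] => True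
  | η, m :: l => m.1 ∈ sus ∧ Constr sus η m.1 ∧ LegalL sus (Function.update η m.1 m.2) l

lemma applyL_append (η : Cfg) (l1 l2 : List Move) :
    applyL η (l1 ++ l2) = applyL (applyL η l1) l2 := by
  induction l1 generalizing η with
  | nil => rfl
  | cons m l ih => simp only [List.cons_append, applyL]; exact ih _

lemma legalL_append {sus : Set Site} {η : Cfg} {l1 l2 : List Move}
    (h1 : LegalL sus η l1) (h2 : LegalL sus (applyL η l1) l2) :
    LegalL sus η (l1 ++ l2) := by
  induction l1 generalizing η with
  | nil => exact h2
  | cons m l ih =>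
    exact ⟨h1.1, h1.2.1, ih h1.2.2 h2⟩

lemma applyL_eq_of_not_mem {η : Cfg} {l : List Move} {x : Site}
    (h : ∀ m ∈ l, m.1 ≠ x) : applyL η l x = η x := by
  induction l generalizing η with
  | nil => rfl
  | cons m l ih =>
    rw [applyL, ih (fun m hm => h m (List.mem_cons_of_mem _ hm))]
    exact Function.update_of_ne (Ne.symm (h m List.mem_cons_self)) _ _

lemma applyL_diff {η : Cfg} {l : List Move} {x : Site}
    (h : applyL η l x ≠ η x) : ∃ m ∈ l, m.1 = x := by
  by_contra hc
  push_neg at hc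
  exact h (applyL_eq_of_not_mem hc)

/-- evolve only depends on the moves before t -/
lemma evolve_congr {η : Cfg} {ms ms' : ℕ → Move} {t : ℕ}
    (h : ∀ s < t, ms s = ms' s) : evolve η ms t = evolve η ms' t := by
  induction t with
  | zero => rfl
  | succ t ih =>
    rw [evolve, evolve, ih (fun s hs => h s (Nat.lt_succ_of_lt hs)),
      h t (Nat.lt_succ_self t)]

lemma evolve_untouched {η : Cfg} {ms : ℕ → Move} {t : ℕ} {x : Site}
    (h : ∀ s < t, (ms s).1 ≠ x) : evolve η ms t x = η x := by
  induction t with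
  | zero => rfl
  | succ t ih =>
    rw [evolve, Function.update_of_ne (fun hx => h t (Nat.lt_succ_self t) hx.symm)]
    exact ih (fun s hs => h s (Nat.lt_succ_of_lt hs))

lemma evolve_last {η : Cfg} {ms : ℕ → Move} {s t : ℕ} {x : Site}
    (hs : s < t) (hx : (ms s).1 = x) (h : ∀ s', s < s' → s' < t → (ms s').1 ≠ x) :
    evolve η ms t x = (ms s).2 := by
  induction t with
  | zero => omega
  | succ t ih =>
    rcases Nat.lt_succ_iff_lt_or_eq.mp hs with h' | rfl
    · rw [evolve, Function.update_of_ne (fun hh => h t h' (Nat.lt_succ_self t) hh.symm)]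
      exact ih h' (fun s' h1 h2 => h s' h1 (Nat.lt_succ_of_lt h2))
    · rw [evolve, hx, Function.update_self]

/-- bridging applyL of take with evolve of getD-moves -/
lemma evolve_getD {η : Cfg} (l : List Move) (d : Move) {t : ℕ} (ht : t ≤ l.length) :
    evolve η (fun s => l.getD s d) t = applyL η (l.take t) := by
  induction t with
  | zero => simp [evolve, applyL]
  | succ t ih =>
    have ht' : t < l.length := ht
    rw [evolve, ih (le_of_lt ht'), List.take_succ]
    have : l[t]? = some l[t] := List.getElem?_eq_getElem ht'
    rw [this]
    simp only [Option.toList_some, applyL_append, applyL]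
    rw [List.getD_eq_getElem l d ht']

lemma legalL_iff {sus : Set Site} {l : List Move} {η : Cfg} :
    LegalL sus η l ↔ ∀ i (h : i < l.length),
      (l[i].1 ∈ sus ∧ Constr sus (applyL η (l.take i)) l[i].1) := by
  induction l generalizing η with
  | nil => simp [LegalL]
  | cons m l ih =>
    constructor
    · rintro ⟨h1, h2, h3⟩ i hi
      cases i with
      | zero => exact ⟨h1, by simpa [applyL] using h2⟩
      | succ i =>
        have := (ih.mp h3) i (by simpa using hi)
        simpa [applyL, List.take_succ_cons] using this
    · intro h
      refine ⟨(h 0 (by simp)).1, by exact (h 0 (by simp)).2, ih.mpr ?_⟩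
      intro i hi
      have := h (i+1) (by simpa using hi)
      simpa [applyL, List.take_succ_cons] using this

lemma legalSeq_of_legalL {sus : Set Site} {η : Cfg} {l : List Move} (d : Move)
    (h : LegalL sus η l) : LegalSeq sus η (fun s => l.getD s d) l.length := by
  intro i hi
  have h2 := legalL_iff.mp h i hi
  rw [evolve_getD l d (le_of_lt hi)]
  simpa [List.getD, List.getElem?_eq_getElem hi] using h2

/-- apply map range as evolve -/
lemma applyL_map_range (ξ : Cfg) (f : ℕ → Move) (n : ℕ) :
    applyL ξ ((List.range n).map f) = evolve ξ f n := by
  induction n with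
  | zero => rfl
  | succ n ih =>
    rw [List.range_succ, List.map_append, applyL_append, ih]
    rfl

lemma legalL_map_range {sus : Set Site} {ξ : Cfg} {f : ℕ → Move} {n : ℕ}
    (h : ∀ i < n, (f i).1 ∈ sus ∧ Constr sus (evolve ξ f i) (f i).1) :
    LegalL sus ξ ((List.range n).map f) := by
  apply legalL_iff.mpr
  intro i hi
  simp only [List.length_map, List.length_range] at hi
  have hg : ((List.range n).map f)[i] = f i := by simp
  have htk : ((List.range n).map f).take i = (List.range i).map f := by
    rw [← List.map_take, List.take_range, Nat.min_eq_left (le_of_lt hi)]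
  rw [hg, htk, applyL_map_range]
  exact h i hi

end Infra

section Geom

/-- column c of the box -/
def colS (b : Site) (L : ℕ) (c : ℕ) : Set Site :=
  {x | x.1 = b.1 + c ∧ ∃ j < L, x.2 = b.2 + j}

/-- row 0 of the box -/
def rowS (b : Site) (L : ℕ) : Set Site :=
  {x | x.2 = b.2 ∧ ∃ c < L, x.1 = b.1 + c}

def trailS (b : Site) (V : Set ℕ) : Set Site :=
  {x | ∃ v ∈ V, x = (b.1 + v, b.2)}

lemma colS_subset_box {b : Site} {L c : ℕ} (hc : c < L) : colS b L c ⊆ boxAt L b := by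
  rintro ⟨x1, x2⟩ ⟨h1, j, hj, h2⟩
  simp only [boxAt, Set.mem_setOf_eq] at *
  omega

lemma mem_colS {b : Site} {L c j : ℕ} (hj : j < L) :
    ((b.1 + c, b.2 + j) : Site) ∈ colS b L c := ⟨rfl, j, hj, rfl⟩

lemma ncard_le_of_image {α : Type*} (f : ℕ → α) (L : ℕ) {S : Set α}
    (h : S ⊆ f '' {j | j < L}) : S.ncard ≤ L := by
  have h1 : {j | j < L} = ↑(Finset.range L) := by ext j; simp
  have h2 : (f '' {j | j < L}).Finite := by
    rw [h1]; exact Set.Finite.image f (Finset.range L).finite_toSet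
  calc S.ncard ≤ (f '' {j | j < L}).ncard := Set.ncard_le_ncard h h2
    _ ≤ ({j | j < L} : Set ℕ).ncard := Set.ncard_image_le (by rw [h1]; exact (Finset.range L).finite_toSet)
    _ = L := by rw [h1, Set.ncard_coe_finset, Finset.card_range]

lemma ncard_colS (b : Site) (L c : ℕ) : (colS b L c).ncard ≤ L := by
  apply ncard_le_of_image (fun j : ℕ => ((b.1 + c, b.2 + j) : Site)) L
  rintro ⟨x1, x2⟩ ⟨h1, j, hj, h2⟩
  exact ⟨j, hj, by simp [h1.symm, h2.symm]⟩

lemma ncard_trailS {b : Site} {L : ℕ} {V : Set ℕ} (hV : ∀ v ∈ V, v < L) :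
    (trailS b V).ncard ≤ L := by
  apply ncard_le_of_image (fun c : ℕ => ((b.1 + c, b.2) : Site)) L
  rintro x ⟨v, hv, rfl⟩
  exact ⟨v, hV v hv, rfl⟩

lemma colS_finite (b : Site) (L c : ℕ) : (colS b L c).Finite := by
  apply Set.Finite.subset (Set.Finite.image (fun j : ℕ => ((b.1 + c, b.2 + j) : Site))
    (Set.finite_Iio L))
  rintro ⟨x1, x2⟩ ⟨h1, j, hj, h2⟩
  exact ⟨j, hj, by simp [h1.symm, h2.symm]⟩

lemma trailS_finite {b : Site} {L : ℕ} {V : Set ℕ} (hV : ∀ v ∈ V, v < L) :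
    (trailS b V).Finite := by
  apply Set.Finite.subset (Set.Finite.image (fun c : ℕ => ((b.1 + c, b.2) : Site))
    (Set.finite_Iio L))
  rintro x ⟨v, hv, rfl⟩
  exact ⟨v, hV v hv, rfl⟩

/-- the main cardinality bound: trail + 2 columns ≤ 3L -/
lemma ncard_bound3 {b : Site} {L c c' : ℕ} {V : Set ℕ} (hV : ∀ v ∈ V, v < L)
    {S : Set Site} (h : S ⊆ trailS b V ∪ (colS b L c ∪ colS b L c')) :
    S.ncard ≤ 3 * L := by
  have hfin : (trailS b V ∪ (colS b L c ∪ colS b L c')).Finite :=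
    ((trailS_finite hV).union ((colS_finite b L c).union (colS_finite b L c')))
  calc S.ncard ≤ (trailS b V ∪ (colS b L c ∪ colS b L c')).ncard :=
        Set.ncard_le_ncard h hfin
    _ ≤ (trailS b V).ncard + (colS b L c ∪ colS b L c').ncard := Set.ncard_union_le _ _
    _ ≤ (trailS b V).ncard + ((colS b L c).ncard + (colS b L c').ncard) :=
        Nat.add_le_add_left (Set.ncard_union_le _ _) _
    _ ≤ L + (L + L) := by
        gcongr
        · exact ncard_trailS hV
        · exact ncard_colS b L c
        · exact ncard_colS b L c'
    _ = 3 * L := by ring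

end Geom

section Step

/-- The sweep invariant: `c` is the current fully infected column, `V` the set of
visited columns whose bottom sites are infected. -/
def InvP (L : ℕ) (η ξ : Cfg) (b : Site) (V : Set ℕ) (c : ℕ) : Prop :=
  c < L ∧ c ∈ V ∧ (∀ v ∈ V, v < L) ∧
  (∀ j < L, ξ (b.1 + (c : ℤ), b.2 + (j : ℤ)) = true) ∧
  (∀ v ∈ V, ξ (b.1 + (v : ℤ), b.2) = true) ∧
  (∀ x, ξ x ≠ η x → x ∈ trailS b V ∪ colS b L c)

lemma step_lemma {L : ℕ} {sus : Set Site} {η ξ : Cfg} {b : Site} {V : Set ℕ} {c c' : ℕ}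
    (hsus : ∀ x ∈ boxAt L b, x ∈ sus)
    (hI : InvP L η ξ b V c) (hc' : c' < L) (hadj : c + 1 = c' ∨ c' + 1 = c)
    (j0 : ℕ) (hj0 : j0 < L) (hseed : ξ (b.1 + (c' : ℤ), b.2 + (j0 : ℤ)) = true) :
    ∃ l : List Move, l.length ≤ 2 * L ∧ LegalL sus ξ l ∧
      (∀ m ∈ l, m.1 ∈ colS b L c ∪ colS b L c') ∧
      InvP L η (applyL ξ l) b (insert c' V) c' := by
  obtain ⟨hcL, hcV, hVL, hcol, htrail, hdiff⟩ := hI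
  have hcc' : c ≠ c' := by omega
  have hL1 : 1 ≤ L := by omega
  set fup : ℕ → Move := fun t =>
    (((b.1 + (c' : ℤ), b.2 + ((j0 + 1 + t : ℕ) : ℤ)) : Site), true) with hfup
  set fdn : ℕ → Move := fun t =>
    (((b.1 + (c' : ℤ), b.2 + ((j0 - 1 - t : ℕ) : ℤ)) : Site), true) with hfdn
  set frs : ℕ → Move := fun t =>
    (((b.1 + (c : ℤ), b.2 + ((L - 1 - t : ℕ) : ℤ)) : Site),
      η (b.1 + (c : ℤ), b.2 + ((L - 1 - t : ℕ) : ℤ))) with hfrs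
  set ξ1 := evolve ξ fup (L - 1 - j0) with hξ1
  set ξ2 := evolve ξ1 fdn j0 with hξ2
  have hbox : ∀ (e : ℕ) (r : ℕ), e < L → r < L →
      ((b.1 + (e : ℤ), b.2 + (r : ℤ)) : Site) ∈ boxAt L b := by
    intro e r he hr
    exact ⟨by omega, by omega, by omega, by omega⟩
  -- values after the up phase
  have hup_val : ∀ j, j0 ≤ j → j < L → ξ1 (b.1 + (c' : ℤ), b.2 + (j : ℤ)) = true := by
    intro j h1 h2
    rcases Nat.eq_or_lt_of_le h1 with heq | hlt
    · have h := evolve_untouched (η := ξ) (ms := fup) (t := L - 1 - j0)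
        (x := (b.1 + (c' : ℤ), b.2 + (j : ℤ)))
        (by intro s _; simp only [hfup, ne_eq, Prod.mk.injEq, true_and, and_true]; omega)
      rw [hξ1, h]; exact heq ▸ hseed
    · have h := evolve_last (η := ξ) (ms := fup) (s := j - j0 - 1) (t := L - 1 - j0)
        (x := (b.1 + (c' : ℤ), b.2 + (j : ℤ)))
        (by omega)
        (by simp only [hfup, Prod.mk.injEq, true_and, and_true]; omega)
        (by intro s' h1' h2'; simp only [hfup, ne_eq, Prod.mk.injEq, true_and, and_true]; omega)
      rw [hξ1, h]
  -- up phase does not touch other columns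
  have hup_offc : ∀ y : Site, y.1 ≠ b.1 + (c' : ℤ) → ξ1 y = ξ y := by
    intro y hy
    rw [hξ1]
    apply evolve_untouched
    intro s _
    simp only [hfup, ne_eq]
    intro h
    exact hy (by rw [← h])
  -- legality of up phase
  have hup_leg : ∀ i, i < L - 1 - j0 →
      (fup i).1 ∈ sus ∧ Constr sus (evolve ξ fup i) (fup i).1 := by
    intro i hi
    have hrow : j0 + 1 + i < L := by omega
    refine ⟨hsus _ (hbox c' (j0 + 1 + i) hc' hrow), ?_⟩
    apply constr_of_two (x := (b.1 + (c' : ℤ), b.2 + ((j0 + 1 + i : ℕ) : ℤ)))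
      (y1 := (b.1 + (c' : ℤ), b.2 + ((j0 + i : ℕ) : ℤ)))
      (y2 := (b.1 + (c : ℤ), b.2 + ((j0 + 1 + i : ℕ) : ℤ)))
    · simp only [ne_eq, Prod.mk.injEq, true_and, and_true]; omega
    · refine Or.inl ⟨rfl, Or.inl ?_⟩
      omega
    · refine Or.inr ⟨rfl, ?_⟩
      rcases hadj with h | h
      · left; omega
      · right; omega
    · exact hsus _ (hbox c' (j0 + i) hc' (by omega))
    · exact hsus _ (hbox c (j0 + 1 + i) hcL hrow)
    · rcases Nat.eq_zero_or_pos i with rfl | hpos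
      · show evolve ξ fup 0 _ = true
        rw [evolve]
        simpa using hseed
      · have h := evolve_last (η := ξ) (ms := fup) (s := i - 1) (t := i)
          (x := (b.1 + (c' : ℤ), b.2 + ((j0 + i : ℕ) : ℤ)))
          (by omega)
          (by simp only [hfup, Prod.mk.injEq, true_and, and_true]; omega)
          (by intro s' h1' h2'; simp only [hfup, ne_eq, Prod.mk.injEq, true_and, and_true]; omega)
        rw [h]
    · have h := evolve_untouched (η := ξ) (ms := fup) (t := i)
        (x := (b.1 + (c : ℤ), b.2 + ((j0 + 1 + i : ℕ) : ℤ)))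
        (by intro s _; simp only [hfup, ne_eq, Prod.mk.injEq, true_and, and_true]; omega)
      rw [h]
      exact hcol _ hrow
  -- values after the down phase: column c' fully infected
  have hdn_val : ∀ j, j < L → ξ2 (b.1 + (c' : ℤ), b.2 + (j : ℤ)) = true := by
    intro j hj
    rcases le_or_gt j0 j with h1 | h1
    · have h := evolve_untouched (η := ξ1) (ms := fdn) (t := j0)
        (x := (b.1 + (c' : ℤ), b.2 + (j : ℤ)))
        (by intro s hs; simp only [hfdn, ne_eq, Prod.mk.injEq, true_and, and_true]; omega)
      rw [hξ2, h]
      exact hup_val j h1 hj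
    · have h := evolve_last (η := ξ1) (ms := fdn) (s := j0 - 1 - j) (t := j0)
        (x := (b.1 + (c' : ℤ), b.2 + (j : ℤ)))
        (by omega)
        (by simp only [hfdn, Prod.mk.injEq, true_and, and_true]; omega)
        (by intro s' h1' h2'; simp only [hfdn, ne_eq, Prod.mk.injEq, true_and, and_true]; omega)
      rw [hξ2, h]
  have hdn_offc : ∀ y : Site, y.1 ≠ b.1 + (c' : ℤ) → ξ2 y = ξ1 y := by
    intro y hy
    rw [hξ2]
    apply evolve_untouched
    intro s _
    simp only [hfdn, ne_eq]
    intro h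
    exact hy (by rw [← h])
  -- column c is untouched by phases 1 and 2
  have hcol2 : ∀ j, j < L → ξ2 (b.1 + (c : ℤ), b.2 + (j : ℤ)) = true := by
    intro j hj
    have hfst : ((b.1 + (c : ℤ), b.2 + (j : ℤ)) : Site).1 ≠ b.1 + (c' : ℤ) := by
      show b.1 + (c : ℤ) ≠ b.1 + (c' : ℤ)
      omega
    rw [hdn_offc _ hfst, hup_offc _ hfst]
    exact hcol j hj
  -- legality of down phase
  have hdn_leg : ∀ i, i < j0 →
      (fdn i).1 ∈ sus ∧ Constr sus (evolve ξ1 fdn i) (fdn i).1 := by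
    intro i hi
    have hrow : j0 - 1 - i < L := by omega
    refine ⟨hsus _ (hbox c' (j0 - 1 - i) hc' hrow), ?_⟩
    apply constr_of_two (x := (b.1 + (c' : ℤ), b.2 + ((j0 - 1 - i : ℕ) : ℤ)))
      (y1 := (b.1 + (c' : ℤ), b.2 + ((j0 - i : ℕ) : ℤ)))
      (y2 := (b.1 + (c : ℤ), b.2 + ((j0 - 1 - i : ℕ) : ℤ)))
    · simp only [ne_eq, Prod.mk.injEq, true_and, and_true]; omega
    · refine Or.inl ⟨rfl, Or.inr ?_⟩
      omega
    · refine Or.inr ⟨rfl, ?_⟩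
      rcases hadj with h | h
      · left; omega
      · right; omega
    · exact hsus _ (hbox c' (j0 - i) hc' (by omega))
    · exact hsus _ (hbox c (j0 - 1 - i) hcL hrow)
    · rcases Nat.eq_zero_or_pos i with rfl | hpos
      · show evolve ξ1 fdn 0 _ = true
        rw [evolve]
        have := hup_val j0 le_rfl hj0
        simpa using this
      · have h := evolve_last (η := ξ1) (ms := fdn) (s := i - 1) (t := i)
          (x := (b.1 + (c' : ℤ), b.2 + ((j0 - i : ℕ) : ℤ)))
          (by omega)
          (by simp only [hfdn, Prod.mk.injEq, true_and, and_true]; omega)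
          (by intro s' h1' h2'; simp only [hfdn, ne_eq, Prod.mk.injEq, true_and, and_true]; omega)
        rw [h]
    · have h := evolve_untouched (η := ξ1) (ms := fdn) (t := i)
        (x := (b.1 + (c : ℤ), b.2 + ((j0 - 1 - i : ℕ) : ℤ)))
        (by intro s _; simp only [hfdn, ne_eq, Prod.mk.injEq, true_and, and_true]; omega)
      rw [h, hup_offc]
      · exact hcol _ hrow
      · show b.1 + (c : ℤ) ≠ b.1 + (c' : ℤ)
        omega
  -- legality of restore phase
  have hrs_leg : ∀ i, i < L - 1 →
      (frs i).1 ∈ sus ∧ Constr sus (evolve ξ2 frs i) (frs i).1 := by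
    intro i hi
    have hrow : L - 1 - i < L := by omega
    refine ⟨hsus _ (hbox c (L - 1 - i) hcL hrow), ?_⟩
    apply constr_of_two (x := (b.1 + (c : ℤ), b.2 + ((L - 1 - i : ℕ) : ℤ)))
      (y1 := (b.1 + (c' : ℤ), b.2 + ((L - 1 - i : ℕ) : ℤ)))
      (y2 := (b.1 + (c : ℤ), b.2 + ((L - 2 - i : ℕ) : ℤ)))
    · simp only [ne_eq, Prod.mk.injEq, true_and, and_true]; omega
    · refine Or.inr ⟨rfl, ?_⟩
      rcases hadj with h | h
      · right; omega
      · left; omega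
    · refine Or.inl ⟨rfl, Or.inl ?_⟩
      omega
    · exact hsus _ (hbox c' (L - 1 - i) hc' hrow)
    · exact hsus _ (hbox c (L - 2 - i) hcL (by omega))
    · have h := evolve_untouched (η := ξ2) (ms := frs) (t := i)
        (x := (b.1 + (c' : ℤ), b.2 + ((L - 1 - i : ℕ) : ℤ)))
        (by intro s _; simp only [hfrs, ne_eq, Prod.mk.injEq, true_and, and_true]; omega)
      rw [h]
      exact hdn_val _ hrow
    · have h := evolve_untouched (η := ξ2) (ms := frs) (t := i)
        (x := (b.1 + (c : ℤ), b.2 + ((L - 2 - i : ℕ) : ℤ)))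
        (by intro s hs; simp only [hfrs, ne_eq, Prod.mk.injEq, true_and, and_true]; omega)
      rw [h]
      exact hcol2 _ (by omega)
  -- assemble
  refine ⟨(List.range (L - 1 - j0)).map fup ++
    ((List.range j0).map fdn ++ (List.range (L - 1)).map frs), ?_, ?_, ?_, ?_⟩
  · simp only [List.length_append, List.length_map, List.length_range]
    omega
  · apply legalL_append (legalL_map_range hup_leg)
    rw [applyL_map_range, ← hξ1]
    apply legalL_append (legalL_map_range hdn_leg)
    rw [applyL_map_range, ← hξ2]
    exact legalL_map_range hrs_leg
  · intro m hm
    simp only [List.mem_append, List.mem_map, List.mem_range] at hm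
    rcases hm with ⟨t, ht, rfl⟩ | ⟨t, ht, rfl⟩ | ⟨t, ht, rfl⟩
    · exact Or.inr (mem_colS (by omega))
    · exact Or.inr (mem_colS (by omega))
    · exact Or.inl (mem_colS (by omega))
  · -- the invariant for the new configuration
    have happ : applyL ξ ((List.range (L - 1 - j0)).map fup ++
        ((List.range j0).map fdn ++ (List.range (L - 1)).map frs)) = evolve ξ2 frs (L - 1) := by
      rw [applyL_append, applyL_append, applyL_map_range, applyL_map_range, applyL_map_range,
        ← hξ1, ← hξ2]
    rw [happ]
    set ζ := evolve ξ2 frs (L - 1) with hζ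
    have hR1 : ∀ j, j < L → ζ (b.1 + (c' : ℤ), b.2 + (j : ℤ)) = true := by
      intro j hj
      have h := evolve_untouched (η := ξ2) (ms := frs) (t := L - 1)
        (x := (b.1 + (c' : ℤ), b.2 + (j : ℤ)))
        (by intro s _; simp only [hfrs, ne_eq, Prod.mk.injEq, true_and, and_true]; omega)
      rw [hζ, h]
      exact hdn_val j hj
    have hR2 : ζ (b.1 + (c : ℤ), b.2) = true := by
      have h := evolve_untouched (η := ξ2) (ms := frs) (t := L - 1)
        (x := (b.1 + (c : ℤ), b.2))
        (by intro s hs; simp only [hfrs, ne_eq, Prod.mk.injEq, true_and, and_true]; omega)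
      rw [hζ, h]
      have := hcol2 0 hL1
      simpa using this
    have hR3 : ∀ j, 1 ≤ j → j < L →
        ζ (b.1 + (c : ℤ), b.2 + (j : ℤ)) = η (b.1 + (c : ℤ), b.2 + (j : ℤ)) := by
      intro j h1 h2
      have h := evolve_last (η := ξ2) (ms := frs) (s := L - 1 - j) (t := L - 1)
        (x := (b.1 + (c : ℤ), b.2 + (j : ℤ)))
        (by omega)
        (by simp only [hfrs, Prod.mk.injEq, true_and, and_true]; omega)
        (by intro s' h1' h2'; simp only [hfrs, ne_eq, Prod.mk.injEq, true_and, and_true]; omega)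
      rw [hζ, h]
      simp only [hfrs]
      have : L - 1 - (L - 1 - j) = j := by omega
      rw [this]
    have hR4 : ∀ y : Site, y ∉ colS b L c → y ∉ colS b L c' → ζ y = ξ y := by
      intro y hy1 hy2
      have h1 : ∀ s, s < L - 1 → (frs s).1 ≠ y := by
        intro s hs h
        apply hy1
        rw [← h]
        exact mem_colS (by omega)
      have h2 : ∀ s, s < j0 → (fdn s).1 ≠ y := by
        intro s hs h
        apply hy2
        rw [← h]
        exact mem_colS (by omega)
      have h3 : ∀ s, s < L - 1 - j0 → (fup s).1 ≠ y := by
        intro s hs h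
        apply hy2
        rw [← h]
        exact mem_colS (by omega)
      rw [hζ, evolve_untouched h1, hξ2, evolve_untouched h2, hξ1, evolve_untouched h3]
    refine ⟨hc', Set.mem_insert _ _, ?_, hR1, ?_, ?_⟩
    · rintro v (rfl | hv)
      · exact hc'
      · exact hVL v hv
    · rintro v (rfl | hv)
      · have := hR1 0 hL1
        simpa using this
      · rcases eq_or_ne v c with rfl | hvc
        · exact hR2
        · rcases eq_or_ne v c' with rfl | hvc'
          · have := hR1 0 hL1
            simpa using this
          · rw [hR4]
            · exact htrail v hv
            · rintro ⟨hh, -⟩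
              revert hh
              show ¬ (b.1 + (v : ℤ) = b.1 + (c : ℤ))
              omega
            · rintro ⟨hh, -⟩
              revert hh
              show ¬ (b.1 + (v : ℤ) = b.1 + (c' : ℤ))
              omega
    · intro x hx
      by_cases hx2 : x ∈ colS b L c'
      · exact Or.inr hx2
      by_cases hx1 : x ∈ colS b L c
      · obtain ⟨he1, j, hj, he2⟩ := hx1
        rcases Nat.eq_zero_or_pos j with rfl | hj1
        · refine Or.inl ⟨c, Set.mem_insert_of_mem _ hcV, ?_⟩
          rcases x with ⟨a1, a2⟩
          simp only [Prod.mk.injEq, true_and, and_true]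
          simp only [] at he1 he2
          exact ⟨he1, by simpa using he2⟩
        · exfalso
          apply hx
          have hx' : x = (b.1 + (c : ℤ), b.2 + (j : ℤ)) := by
            rcases x with ⟨a1, a2⟩
            simp only [Prod.mk.injEq, true_and, and_true]
            exact ⟨he1, he2⟩
          rw [hx']
          exact hR3 j hj1 hj
      · rw [hR4 x hx1 hx2] at hx
        rcases hdiff x hx with h | h
        · obtain ⟨v, hv, rfl⟩ := h
          exact Or.inl ⟨v, Set.mem_insert_of_mem _ hv, rfl⟩
        · exact absurd h hx1

end Step

section Sweep

lemma diff_bound_of_step {L : ℕ} {η ξ : Cfg} {b : Site} {V : Set ℕ} {c c' : ℕ}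
    (hV : ∀ v ∈ V, v < L)
    (hdiff : ∀ x, ξ x ≠ η x → x ∈ trailS b V ∪ colS b L c)
    {l : List Move} (hl : ∀ m ∈ l, m.1 ∈ colS b L c ∪ colS b L c') (t : ℕ) :
    {x : Site | applyL ξ (l.take t) x ≠ η x}.ncard ≤ 3 * L := by
  apply ncard_bound3 (c := c) (c' := c') hV
  intro x hx
  simp only [Set.mem_setOf_eq] at hx
  by_cases h : applyL ξ (l.take t) x = ξ x
  · rw [h] at hx
    rcases hdiff x hx with h' | h'
    · exact Or.inl h'
    · exact Or.inr (Or.inl h')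
  · obtain ⟨m, hm, rfl⟩ := applyL_diff h
    exact Or.inr (hl m (List.mem_of_mem_take hm))

lemma sweep_right {L : ℕ} {sus : Set Site} {η : Cfg} {b : Site}
    (hsus : ∀ x ∈ boxAt L b, x ∈ sus)
    (hseeds : ∀ v, v < L → ∃ j, j < L ∧ η (b.1 + (v : ℤ), b.2 + (j : ℤ)) = true) :
    ∀ (d : ℕ) (ξ : Cfg) (V : Set ℕ) (c : ℕ), InvP L η ξ b V c → c + d + 1 = L →
    ∃ (l : List Move) (V' : Set ℕ),
      l.length ≤ 2 * L * d ∧ LegalL sus ξ l ∧ (∀ m ∈ l, m.1 ∈ boxAt L b) ∧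
      V ⊆ V' ∧ (∀ v, c ≤ v → v < L → v ∈ V') ∧
      InvP L η (applyL ξ l) b V' (L - 1) ∧
      (∀ t ≤ l.length, {x : Site | applyL ξ (l.take t) x ≠ η x}.ncard ≤ 3 * L) := by
  intro d
  induction d with
  | zero =>
    intro ξ V c hI hc
    have hceq : c = L - 1 := by omega
    refine ⟨[], V, by simp, trivial, by simp, subset_rfl, ?_, ?_, ?_⟩
    · intro v h1 h2
      have : v = c := by omega
      exact this ▸ hI.2.1
    · show InvP L η ξ b V (L - 1)
      exact hceq ▸ hI
    · intro t ht
      have ht0 : t = 0 := by simpa using ht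
      subst ht0
      show {x : Site | applyL ξ [] x ≠ η x}.ncard ≤ 3 * L
      apply ncard_bound3 (c := c) (c' := c) hI.2.2.1
      intro x hx
      rcases hI.2.2.2.2.2 x hx with h | h
      · exact Or.inl h
      · exact Or.inr (Or.inl h)
  | succ d ih =>
    intro ξ V c hI hc
    have hcL : c < L := hI.1
    have hc1 : c + 1 < L := by omega
    have hL1 : 1 ≤ L := by omega
    -- find a seed in column c+1
    have hseed : ∃ j, j < L ∧ ξ (b.1 + ((c + 1 : ℕ) : ℤ), b.2 + (j : ℤ)) = true := by
      by_cases hcV : c + 1 ∈ V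
      · refine ⟨0, hL1, ?_⟩
        have := hI.2.2.2.2.1 (c + 1) hcV
        simpa using this
      · obtain ⟨j, hj, hη⟩ := hseeds (c + 1) hc1
        refine ⟨j, hj, ?_⟩
        by_contra hne
        have hxd : ξ (b.1 + ((c + 1 : ℕ) : ℤ), b.2 + (j : ℤ)) ≠
            η (b.1 + ((c + 1 : ℕ) : ℤ), b.2 + (j : ℤ)) := by
          rw [hη]; exact hne
        rcases hI.2.2.2.2.2 _ hxd with h | h
        · obtain ⟨v, hv, hveq⟩ := h
          have h1 : b.1 + ((c + 1 : ℕ) : ℤ) = b.1 + (v : ℤ) := congrArg Prod.fst hveq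
          have : v = c + 1 := by omega
          exact hcV (this ▸ hv)
        · obtain ⟨h1, -⟩ := h
          revert h1
          show ¬ (b.1 + ((c + 1 : ℕ) : ℤ) = b.1 + (c : ℤ))
          omega
    obtain ⟨j0, hj0, hseedv⟩ := hseed
    obtain ⟨l1, hl1len, hl1leg, hl1sites, hI1⟩ :=
      step_lemma hsus hI hc1 (Or.inl rfl) j0 hj0 hseedv
    obtain ⟨l2, V', hl2len, hl2leg, hl2sites, hV'sub, hV'cov, hI2, hpre2⟩ :=
      ih (applyL ξ l1) (insert (c + 1) V) (c + 1) hI1 (by omega)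
    refine ⟨l1 ++ l2, V', ?_, legalL_append hl1leg hl2leg, ?_,
      ?_, ?_, ?_, ?_⟩
    · simp only [List.length_append]
      have h2l : 2 * L * (d + 1) = 2 * L * d + 2 * L := by ring
      omega
    · intro m hm
      rcases List.mem_append.mp hm with h | h
      · rcases hl1sites m h with h' | h'
        · exact colS_subset_box hcL h'
        · exact colS_subset_box hc1 h'
      · exact hl2sites m h
    · exact subset_trans (Set.subset_insert _ _) hV'sub
    · intro v h1 h2
      rcases Nat.eq_or_lt_of_le h1 with rfl | h3
      · exact hV'sub (Set.mem_insert_of_mem _ hI.2.1)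
      · exact hV'cov v h3 h2
    · rw [applyL_append]
      exact hI2
    · intro t ht
      rcases le_or_gt t l1.length with h | h
      · rw [List.take_append, Nat.sub_eq_zero_of_le h, List.take_zero,
          List.append_nil]
        exact diff_bound_of_step hI.2.2.1 hI.2.2.2.2.2 hl1sites t
      · rw [List.take_append, List.take_of_length_le (le_of_lt h),
          applyL_append]
        apply hpre2
        simp only [List.length_append] at ht
        omega

lemma sweep_left {L : ℕ} {sus : Set Site} {η : Cfg} {b : Site}
    (hsus : ∀ x ∈ boxAt L b, x ∈ sus)
    (hseeds : ∀ v, v < L → ∃ j, j < L ∧ η (b.1 + (v : ℤ), b.2 + (j : ℤ)) = true) :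
    ∀ (c : ℕ) (ξ : Cfg) (V : Set ℕ), InvP L η ξ b V c →
    ∃ (l : List Move) (V' : Set ℕ),
      l.length ≤ 2 * L * c ∧ LegalL sus ξ l ∧ (∀ m ∈ l, m.1 ∈ boxAt L b) ∧
      V ⊆ V' ∧ (∀ v, v ≤ c → v ∈ V') ∧
      InvP L η (applyL ξ l) b V' 0 ∧
      (∀ t ≤ l.length, {x : Site | applyL ξ (l.take t) x ≠ η x}.ncard ≤ 3 * L) := by
  intro c
  induction c with
  | zero =>
    intro ξ V hI
    refine ⟨[], V, by simp, trivial, by simp, subset_rfl, ?_, hI, ?_⟩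
    · intro v hv
      have : v = 0 := by omega
      exact this ▸ hI.2.1
    · intro t ht
      have ht0 : t = 0 := by simpa using ht
      subst ht0
      show {x : Site | applyL ξ [] x ≠ η x}.ncard ≤ 3 * L
      apply ncard_bound3 (c := 0) (c' := 0) hI.2.2.1
      intro x hx
      rcases hI.2.2.2.2.2 x hx with h | h
      · exact Or.inl h
      · exact Or.inr (Or.inl h)
  | succ c ih =>
    intro ξ V hI
    have hcL : c + 1 < L := hI.1
    have hc1 : c < L := by omega
    have hL1 : 1 ≤ L := by omega
    have hseed : ∃ j, j < L ∧ ξ (b.1 + (c : ℤ), b.2 + (j : ℤ)) = true := by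
      by_cases hcV : c ∈ V
      · refine ⟨0, hL1, ?_⟩
        have := hI.2.2.2.2.1 c hcV
        simpa using this
      · obtain ⟨j, hj, hη⟩ := hseeds c hc1
        refine ⟨j, hj, ?_⟩
        by_contra hne
        have hxd : ξ (b.1 + (c : ℤ), b.2 + (j : ℤ)) ≠
            η (b.1 + (c : ℤ), b.2 + (j : ℤ)) := by
          rw [hη]; exact hne
        rcases hI.2.2.2.2.2 _ hxd with h | h
        · obtain ⟨v, hv, hveq⟩ := h
          have h1 : b.1 + (c : ℤ) = b.1 + (v : ℤ) := congrArg Prod.fst hveq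
          have : v = c := by omega
          exact hcV (this ▸ hv)
        · obtain ⟨h1, -⟩ := h
          revert h1
          show ¬ (b.1 + (c : ℤ) = b.1 + ((c + 1 : ℕ) : ℤ))
          omega
    obtain ⟨j0, hj0, hseedv⟩ := hseed
    obtain ⟨l1, hl1len, hl1leg, hl1sites, hI1⟩ :=
      step_lemma hsus hI hc1 (Or.inr rfl) j0 hj0 hseedv
    obtain ⟨l2, V', hl2len, hl2leg, hl2sites, hV'sub, hV'cov, hI2, hpre2⟩ :=
      ih (applyL ξ l1) (insert c V) hI1
    refine ⟨l1 ++ l2, V', ?_, legalL_append hl1leg hl2leg, ?_,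
      ?_, ?_, ?_, ?_⟩
    · simp only [List.length_append]
      have h2l : 2 * L * (c + 1) = 2 * L * c + 2 * L := by ring
      omega
    · intro m hm
      rcases List.mem_append.mp hm with h | h
      · rcases hl1sites m h with h' | h'
        · exact colS_subset_box hcL h'
        · exact colS_subset_box hc1 h'
      · exact hl2sites m h
    · exact subset_trans (Set.subset_insert _ _) hV'sub
    · intro v hv
      rcases Nat.lt_or_ge v (c + 1) with h3 | h3
      · exact hV'cov v (by omega)
      · have hveq : v = c + 1 := by omega
        exact hveq ▸ hV'sub (Set.mem_insert_of_mem _ hI.2.1)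
    · rw [applyL_append]
      exact hI2
    · intro t ht
      rcases le_or_gt t l1.length with h | h
      · rw [List.take_append, Nat.sub_eq_zero_of_le h, List.take_zero,
          List.append_nil]
        exact diff_bound_of_step hI.2.2.1 hI.2.2.2.2.2 hl1sites t
      · rw [List.take_append, List.take_of_length_le (le_of_lt h),
          applyL_append]
        apply hpre2
        simp only [List.length_append] at ht
        omega

end Sweep

theorem column_to_row :
    ∃ C : ℕ, ∀ (L : ℕ) (sus : Set Site) (η : Cfg) (b : Site),
    GoodBoxAt L sus η b →
    ∀ i : ℕ, i < L → InfColAt L sus η b i →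
    ∃ (ms : ℕ → Move) (k : ℕ),
      k ≤ C * L ^ 2 ∧
      LegalSeq sus η ms k ∧
      (∀ t < k, (ms t).1 ∈ boxAt L b) ∧
      (∃ j < L, InfRowAt L sus (evolve η ms k) b j) ∧
      (∀ y ∉ boxAt L b, evolve η ms k y = η y) ∧
      (∀ t ≤ k, {y : Site | evolve η ms t y ≠ η y}.ncard ≤ 3 * L) := by
  refine ⟨4, ?_⟩
  intro L sus η b hgood i hiL hcol
  have hL1 : 1 ≤ L := by omega
  have hsus := hgood.1
  have hseeds : ∀ v, v < L → ∃ j, j < L ∧ η (b.1 + (v : ℤ), b.2 + (j : ℤ)) = true := by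
    intro v hv
    obtain ⟨j, hj, hinf⟩ := hgood.2.2 v hv
    exact ⟨j, hj, hinf.2⟩
  have hI0 : InvP L η η b {i} i := by
    refine ⟨hiL, Set.mem_singleton _, ?_, ?_, ?_, ?_⟩
    · intro v hv
      rw [Set.mem_singleton_iff] at hv
      exact hv ▸ hiL
    · intro j hj
      exact (hcol j hj).2
    · intro v hv
      rw [Set.mem_singleton_iff] at hv
      subst hv
      have := (hcol 0 hL1).2
      simpa using this
    · intro x hx
      exact absurd rfl hx
  obtain ⟨l1, V1, hlen1, hleg1, hsites1, _, hcov1, hI1, hpre1⟩ :=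
    sweep_left hsus hseeds i η {i} hI0
  obtain ⟨l2, V2, hlen2, hleg2, hsites2, hsub2, hcov2, hI2, hpre2⟩ :=
    sweep_right hsus hseeds (L - 1) (applyL η l1) V1 0 hI1 (by omega)
  refine ⟨fun t => (l1 ++ l2).getD t (((0 : ℤ), (0 : ℤ)), true), (l1 ++ l2).length,
    ?_, ?_, ?_, ?_, ?_, ?_⟩
  · calc (l1 ++ l2).length = l1.length + l2.length := List.length_append
      _ ≤ 2 * L * i + 2 * L * (L - 1) := Nat.add_le_add hlen1 hlen2
      _ ≤ 2 * L * L + 2 * L * L := by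
          gcongr <;> omega
      _ = 4 * L ^ 2 := by ring
  · exact legalSeq_of_legalL _ (legalL_append hleg1 hleg2)
  · intro t ht
    show ((l1 ++ l2).getD t (((0 : ℤ), (0 : ℤ)), true)).1 ∈ boxAt L b
    rw [List.getD_eq_getElem _ _ ht]
    have hmem : (l1 ++ l2)[t] ∈ l1 ++ l2 := List.getElem_mem _
    rcases List.mem_append.mp hmem with h | h
    · exact hsites1 _ h
    · exact hsites2 _ h
  · refine ⟨0, hL1, ?_⟩
    intro i' hi'
    have hfin : evolve η (fun t => (l1 ++ l2).getD t (((0 : ℤ), (0 : ℤ)), true))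
        (l1 ++ l2).length = applyL η (l1 ++ l2) := by
      rw [evolve_getD _ _ le_rfl, List.take_length]
    constructor
    · exact hsus _ ⟨by omega, by omega, by omega, by omega⟩
    · rw [hfin, applyL_append]
      have hv2 : i' ∈ V2 := hcov2 i' (Nat.zero_le _) hi'
      have := hI2.2.2.2.2.1 i' hv2
      simpa using this
  · intro y hy
    rw [evolve_getD _ _ le_rfl, List.take_length]
    apply applyL_eq_of_not_mem
    intro m hm heq
    apply hy
    rw [← heq]
    rcases List.mem_append.mp hm with h | h
    · exact hsites1 _ h
    · exact hsites2 _ h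
  · intro t ht
    rw [evolve_getD _ _ ht]
    rcases le_or_gt t l1.length with h | h
    · rw [List.take_append, Nat.sub_eq_zero_of_le h, List.take_zero,
        List.append_nil]
      exact hpre1 t h
    · rw [List.take_append, List.take_of_length_le (le_of_lt h),
        applyL_append]
      apply hpre2
      simp only [List.length_append] at ht
      omega
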